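/- Let b be a real number and let z be a point of the Poincaré upper half-plane. Then, as s tends to 0 from above, dist(z, b + s*i) + log s tends to log(|z - b|^2 / Im z), where dist is the hyperbolic distance of the upper half-plane and b + s*i denotes the point with real part b and imaginary part s. In particular, if two points z and w satisfy |z - b|^2 / Im z = |w - b|^2 / Im w (i.e. they lie on a common horocycle based at b), then dist(z, b + s*i) - dist(w, b + s*i) tends to 0 as s tends to 0 from above. -/

import Mathlib

open Filter Topology

/-- The hyperbolic distance from a point `z` of the upper half-plane to the point
`b + s*i` (for a real boundary point `b` and cutoff `s > 0`); defined to be `0` for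
`s ≤ 0`. -/
noncomputable def distToCutoff (z : UpperHalfPlane) (b s : ℝ) : ℝ :=
  if hs : 0 < s then
    dist z (⟨(b : ℂ) + s * Complex.I, by simpa using hs⟩ : UpperHalfPlane)
  else 0

/-- **Renormalized distance to a boundary point and horocycles.**
Let `b` be a real boundary point and `z` a point of the Poincaré upper half-plane.
As `s → 0⁺`, `dist(z, b + s*i) + log s` tends to `log(|z - b|² / Im z)`.
In particular, if two points `z`, `w` lie on a common horocycle based at `b`,
i.e. `|z - b|²/Im z = |w - b|²/Im w`, then
`dist(z, b + s*i) - dist(w, b + s*i) → 0` as `s → 0⁺`. -/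
lemma renorm_aux (b : ℝ) (z : UpperHalfPlane) :
    Tendsto (fun s : ℝ => distToCutoff z b s + Real.log s) (𝓝[>] 0)
      (𝓝 (Real.log (‖(z : ℂ) - (b : ℂ)‖ ^ 2 / (z : ℂ).im))) := by
  have him : 0 < (z : ℂ).im := z.2
  set A : ℝ → ℝ := fun s => ‖(z : ℂ) - ((b : ℂ) + s * Complex.I)‖ with hAdef
  have hAcont : Continuous A := by
    apply continuous_norm.comp
    continuity
  have hA0 : 0 < A 0 := by
    have hne : ((z : ℂ) - (b : ℂ)) ≠ 0 := by
      intro h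
      have := congrArg Complex.im h
      simp at this
      exact him.ne' this
    simp only [hAdef]
    simpa using (norm_pos_iff.2 hne)
  set u : ℝ → ℝ := fun s => A s / (2 * Real.sqrt (z : ℂ).im) with hudef
  have hu0 : 0 < u 0 := div_pos hA0 (by positivity)
  have hucont : Continuous u := hAcont.div_const _
  have hsq : Real.sqrt (z : ℂ).im ^ 2 = (z : ℂ).im := Real.sq_sqrt him.le
  have hsqrt_ne : Real.sqrt (z : ℂ).im ≠ 0 := by positivity
  have hsum0 : u 0 + Real.sqrt (0 + (u 0) ^ 2) = 2 * u 0 := by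
    rw [zero_add, Real.sqrt_sq hu0.le]; ring
  have hA0' : A 0 = ‖(z : ℂ) - (b : ℂ)‖ := by simp [hAdef]
  have hval : Real.log (‖(z : ℂ) - (b : ℂ)‖ ^ 2 / (z : ℂ).im)
      = 2 * Real.log (u 0 + Real.sqrt (0 + (u 0) ^ 2)) := by
    rw [hsum0]
    have h2 : ‖(z : ℂ) - (b : ℂ)‖ ^ 2 / (z : ℂ).im = (2 * u 0) ^ 2 := by
      rw [hudef, ← hA0']
      simp only
      have h3 : 2 * (A 0 / (2 * Real.sqrt (z : ℂ).im)) = A 0 / Real.sqrt (z : ℂ).im := by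
        field_simp
      rw [h3, div_pow, hsq]
    rw [h2, Real.log_pow]
    push_cast; ring
  have hlim : Tendsto (fun s : ℝ => 2 * Real.log (u s + Real.sqrt (s + (u s) ^ 2))) (𝓝[>] 0)
      (𝓝 (2 * Real.log (u 0 + Real.sqrt (0 + (u 0) ^ 2)))) := by
    have hcont : ContinuousAt (fun s : ℝ => u s + Real.sqrt (s + (u s) ^ 2)) 0 := by
      fun_prop
    have hpos : u 0 + Real.sqrt (0 + (u 0) ^ 2) ≠ 0 := by
      rw [hsum0]; positivity
    have h := hcont.tendsto
    have hlog : Tendsto Real.log (𝓝 (u 0 + Real.sqrt (0 + (u 0) ^ 2)))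
        (𝓝 (Real.log (u 0 + Real.sqrt (0 + (u 0) ^ 2)))) := Real.continuousAt_log hpos
    exact (((hlog.comp h).const_mul 2).mono_left nhdsWithin_le_nhds)
  rw [hval]
  refine Tendsto.congr' ?_ hlim
  filter_upwards [self_mem_nhdsWithin] with s hs
  have hs : (0 : ℝ) < s := hs
  have hims : 0 < (z : ℂ).im * s := mul_pos him hs
  have hss : Real.sqrt s ≠ 0 := by positivity
  -- unfold the distance
  rw [distToCutoff, dif_pos hs, UpperHalfPlane.dist_eq]
  rw [show UpperHalfPlane.im (⟨(b : ℂ) + s * Complex.I, by simpa using hs⟩ : UpperHalfPlane) = s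
        by simp [UpperHalfPlane.im],
      UpperHalfPlane.coe_mk_subtype,
      show UpperHalfPlane.im z = (z : ℂ).im from rfl, Complex.dist_eq]
  have hdistA : ‖(z : ℂ) - ((b : ℂ) + s * Complex.I)‖ = A s := rfl
  rw [hdistA]
  set d : ℝ := A s / (2 * Real.sqrt ((z : ℂ).im * s)) with hddef
  have hd0 : 0 ≤ d := by
    apply div_nonneg (by simp [hAdef])
    positivity
  have hXpos : 0 < d + Real.sqrt (1 + d ^ 2) := by
    have : (0:ℝ) < Real.sqrt (1 + d ^ 2) := Real.sqrt_pos.2 (by positivity)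
    linarith
  -- key algebraic identity
  have hkey : (d + Real.sqrt (1 + d ^ 2)) * Real.sqrt s = u s + Real.sqrt (s + (u s) ^ 2) := by
    have h1 : d * Real.sqrt s = u s := by
      rw [hddef, hudef]
      simp only
      rw [Real.sqrt_mul him.le]
      field_simp
    have h2 : Real.sqrt (1 + d ^ 2) * Real.sqrt s = Real.sqrt (s + (u s) ^ 2) := by
      rw [← Real.sqrt_mul (by positivity) s]
      congr 1
      have hd2 : d ^ 2 * s = (u s) ^ 2 := by
        rw [hddef, hudef]
        simp only
        rw [div_pow, div_pow, mul_pow, mul_pow, Real.sq_sqrt hims.le, hsq]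
        field_simp
      nlinarith [hd2]
    rw [add_mul, h1, h2]
  have harsinh : Real.arsinh d = Real.log (d + Real.sqrt (1 + d ^ 2)) := rfl
  rw [harsinh, ← hkey, Real.log_mul hXpos.ne' hss, Real.log_sqrt hs.le]
  ring

theorem renormalized_dist_to_boundary (b : ℝ) (z : UpperHalfPlane) :
    Tendsto (fun s : ℝ => distToCutoff z b s + Real.log s) (𝓝[>] 0)
      (𝓝 (Real.log (‖(z : ℂ) - (b : ℂ)‖ ^ 2 / (z : ℂ).im))) ∧
    ∀ w : UpperHalfPlane,
      ‖(z : ℂ) - (b : ℂ)‖ ^ 2 / (z : ℂ).im =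
        ‖(w : ℂ) - (b : ℂ)‖ ^ 2 / (w : ℂ).im →
      Tendsto (fun s : ℝ => distToCutoff z b s - distToCutoff w b s) (𝓝[>] 0) (𝓝 0) := by
  refine ⟨renorm_aux b z, fun w hw => ?_⟩
  have h := (renorm_aux b z).sub (renorm_aux b w)
  rw [hw, sub_self] at h
  refine h.congr fun s => ?_
  ring
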